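/- Let F and F_min be norms on ℝⁿ. Suppose that for every y ∈ ℝⁿ with F(y) = 1 and every α ∈ ∂F²(y) there exists a positive-definite symmetric bilinear form B on ℝⁿ, with induced norm N(w) = √B(w,w), such that: (1) N(y) = 1; (2) F(w) ≥ N(w) for all w ∈ ℝⁿ; (3) {w ∈ ℝⁿ : ⟨α, w⟩ = 0} = {w ∈ ℝⁿ : B(y, w) = 0}; and (4) F_min(w) ≤ N(w) for all w ∈ ℝⁿ. Then F is strongly convex with respect to F_min, i.e. F(z)² ≥ F(y)² + ⟨α, z − y⟩ + F_min(z − y)² for all y, z ∈ ℝⁿ and every α ∈ ∂F²(y). -/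

import Mathlib

open scoped RealInnerProductSpace

/-- `ℝⁿ` with the Euclidean inner product. -/
abbrev En (n : ℕ) := EuclideanSpace ℝ (Fin n)

/-- A (symmetric) norm on `ℝⁿ`. -/
def IsNorm {n : ℕ} (F : En n → ℝ) : Prop :=
  (∀ y, 0 ≤ F y) ∧ (∀ y, F y = 0 ↔ y = 0) ∧
  (∀ l : ℝ, 0 < l → ∀ y, F (l • y) = l * F y) ∧
  (∀ y₁ y₂, F (y₁ + y₂) ≤ F y₁ + F y₂) ∧
  (∀ y, F (-y) = F y)

/-- The subdifferential of `F²` at `y`. -/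
def subdiffSq {n : ℕ} (F : En n → ℝ) (y : En n) : Set (En n) :=
  {α | ∀ z, (F y) ^ 2 + ⟪α, z - y⟫ ≤ (F z) ^ 2}

/-- Strong convexity at a unit vector of `F`, given an inner ellipsoid there. -/
private lemma core_unit {n : ℕ} (F Fmin : En n → ℝ) (hF : IsNorm F) (hFmin : IsNorm Fmin)
    (hell : ∀ y : En n, F y = 1 → ∀ α ∈ subdiffSq F y,
      ∃ B : En n →ₗ[ℝ] En n →ₗ[ℝ] ℝ,
        (∀ v w, B v w = B w v) ∧
        (∀ v : En n, v ≠ 0 → 0 < B v v) ∧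
        Real.sqrt (B y y) = 1 ∧
        (∀ w : En n, Real.sqrt (B w w) ≤ F w) ∧
        (∀ w : En n, ⟪α, w⟫ = 0 ↔ B y w = 0) ∧
        (∀ w : En n, Fmin w ≤ Real.sqrt (B w w)))
    (y : En n) (hy1 : F y = 1) (α : En n) (hα : α ∈ subdiffSq F y) (z : En n) :
    1 + ⟪α, z - y⟫ + (Fmin (z - y)) ^ 2 ≤ (F z) ^ 2 := by
  obtain ⟨B, hsymm, hpos, hNy, hNF, hker, hFminN⟩ := hell y hy1 α hα
  have hBnn : ∀ v : En n, 0 ≤ B v v := by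
    intro v
    rcases eq_or_ne v 0 with rfl | h
    · simp
    · exact (hpos v h).le
  have hByy : B y y = 1 := Real.sqrt_eq_one.mp hNy
  -- from the subgradient inequality along the ray through y, ⟪α,y⟫ = 2
  have key : ∀ t : ℝ, 0 < t → 1 + (t - 1) * ⟪α, y⟫ ≤ t ^ 2 := by
    intro t ht
    have h := hα (t • y)
    have hFt : F (t • y) = t := by rw [hF.2.2.1 t ht y, hy1, mul_one]
    have hin : ⟪α, t • y - y⟫ = (t - 1) * ⟪α, y⟫ := by
      have hd : t • y - y = (t - 1) • y := by rw [sub_smul, one_smul]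
      rw [hd, real_inner_smul_right]
    rw [hFt, hin, hy1] at h
    simpa using h
  have hc2 : ⟪α, y⟫ = 2 := by
    have hle : ⟪α, y⟫ ≤ 2 := by
      refine le_of_forall_pos_le_add ?_
      intro ε hε
      have h := key (1 + ε) (by linarith)
      nlinarith
    have hge : 2 ≤ ⟪α, y⟫ := by
      refine le_of_forall_pos_le_add ?_
      intro ε hε
      rcases lt_or_ge ε 1 with h1 | h1
      · have h := key (1 - ε / 2) (by linarith)
        nlinarith
      · have h := key (1 / 2) (by norm_num)
        nlinarith
    linarith
  -- ⟪α, w⟫ = 2 B y w for every w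
  have hαB : ∀ w : En n, ⟪α, w⟫ = 2 * B y w := by
    intro w
    have h0 : B y (w - (B y w) • y) = 0 := by
      rw [map_sub, map_smul, smul_eq_mul, hByy, mul_one, sub_self]
    have h1 : ⟪α, w - (B y w) • y⟫ = 0 := (hker _).mpr h0
    rw [inner_sub_right, real_inner_smul_right, hc2] at h1
    linarith
  have hz2 : B z z ≤ (F z) ^ 2 := by
    nlinarith [Real.sq_sqrt (hBnn z), hNF z, Real.sqrt_nonneg (B z z), hF.1 z]
  have hexp : B z z = 1 + 2 * B y (z - y) + B (z - y) (z - y) := by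
    have hzz : z = y + (z - y) := by abel
    calc B z z = B (y + (z - y)) (y + (z - y)) := by rw [← hzz]
      _ = 1 + 2 * B y (z - y) + B (z - y) (z - y) := by
          simp only [map_add, LinearMap.add_apply]
          rw [hsymm (z - y) y, hByy]; ring
  have hmin : (Fmin (z - y)) ^ 2 ≤ B (z - y) (z - y) := by
    nlinarith [hFminN (z - y), hFmin.1 (z - y), Real.sq_sqrt (hBnn (z - y)),
      Real.sqrt_nonneg (B (z - y) (z - y))]
  rw [hαB (z - y)]
  linarith

/-- Existence of a subgradient of `F²` at a unit vector, via Hahn–Banach. -/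
private lemma exists_subgrad {n : ℕ} (F : En n → ℝ) (hF : IsNorm F)
    (y : En n) (hy1 : F y = 1) : ∃ α, α ∈ subdiffSq F y := by
  have hy0 : y ≠ 0 := by
    intro h
    rw [h, (hF.2.1 0).mpr rfl] at hy1
    norm_num at hy1
  -- Hahn–Banach: a linear functional g ≤ F with g y = 1
  have hbound : ∀ x : (LinearPMap.mkSpanSingleton (K := ℝ) (σ := RingHom.id ℝ) y (1 : ℝ) hy0).domain,
      (LinearPMap.mkSpanSingleton (K := ℝ) (σ := RingHom.id ℝ) y (1 : ℝ) hy0) x ≤ F x := by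
    rintro ⟨x, hx⟩
    obtain ⟨t, rfl⟩ := (Submodule.mem_span_singleton (R := ℝ)).mp hx
    have happ : (LinearPMap.mkSpanSingleton (K := ℝ) (σ := RingHom.id ℝ) y (1 : ℝ) hy0)
        ⟨t • y, hx⟩ = t := by
      have := LinearPMap.mkSpanSingleton'_apply y (1 : ℝ) _ t hx
      simpa using this
    rw [happ]
    rcases lt_trichotomy t 0 with h | h | h
    · exact h.le.trans (hF.1 _)
    · subst h; simp [(hF.2.1 (0 : En n)).mpr rfl]
    · rw [hF.2.2.1 t h y, hy1, mul_one]
  obtain ⟨g, hg1, hg2⟩ := exists_extension_of_le_sublinear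
    (LinearPMap.mkSpanSingleton (K := ℝ) (σ := RingHom.id ℝ) y (1 : ℝ) hy0) F hF.2.2.1 hF.2.2.2.1 hbound
  have hgy : g y = 1 := by
    have := hg1 ⟨y, Submodule.mem_span_singleton_self y⟩
    rw [this, LinearPMap.mkSpanSingleton_apply]
  have habs : ∀ w : En n, -F w ≤ g w := by
    intro w
    have := hg2 (-w)
    rw [map_neg, hF.2.2.2.2] at this
    linarith
  -- α := 2 • (dual vector of g)
  refine ⟨(InnerProductSpace.toDual ℝ (En n)).symm
      ((2 : ℝ) • (LinearMap.toContinuousLinearMap g)), ?_⟩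
  intro w
  have hin : ⟪(InnerProductSpace.toDual ℝ (En n)).symm
      ((2 : ℝ) • (LinearMap.toContinuousLinearMap g)), w - y⟫ = 2 * (g w - g y) := by
    rw [InnerProductSpace.toDual_symm_apply]
    simp [map_sub]
    ring
  rw [hin, hy1, hgy]
  nlinarith [sq_nonneg (g w - 1), hg2 w, habs w, hF.1 w,
    mul_nonneg (sub_nonneg.mpr (hg2 w)) (by linarith [habs w, hF.1 w] : (0:ℝ) ≤ F w + g w)]

/-- Geometric criterion for strong convexity: if at every unit vector `y` of `F` and
every `α ∈ ∂F²(y)` there is a positive-definite symmetric bilinear form `B` whose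
induced norm `N = √B(·,·)` satisfies `N(y) = 1`, `N ≤ F`, whose unit sphere is tangent
to that of `F` at `y` (i.e. `ker α = {w : B(y,w) = 0}`), and with `F_min ≤ N`, then `F`
is strongly convex with respect to `F_min`. -/
theorem stronglyConvex_of_inner_ellipsoids {n : ℕ} (F Fmin : En n → ℝ)
    (hF : IsNorm F) (hFmin : IsNorm Fmin)
    (hell : ∀ y : En n, F y = 1 → ∀ α ∈ subdiffSq F y,
      ∃ B : En n →ₗ[ℝ] En n →ₗ[ℝ] ℝ,
        (∀ v w, B v w = B w v) ∧
        (∀ v : En n, v ≠ 0 → 0 < B v v) ∧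
        Real.sqrt (B y y) = 1 ∧
        (∀ w : En n, Real.sqrt (B w w) ≤ F w) ∧
        (∀ w : En n, ⟪α, w⟫ = 0 ↔ B y w = 0) ∧
        (∀ w : En n, Fmin w ≤ Real.sqrt (B w w))) :
    ∀ y z : En n, ∀ α ∈ subdiffSq F y,
      (F y) ^ 2 + ⟪α, z - y⟫ + (Fmin (z - y)) ^ 2 ≤ (F z) ^ 2 := by
  -- first, Fmin ≤ F everywhere
  have hle : ∀ w : En n, Fmin w ≤ F w := by
    intro w
    rcases eq_or_ne w 0 with rfl | hw0
    · rw [(hFmin.2.1 0).mpr rfl, (hF.2.1 0).mpr rfl]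
    · have hc : 0 < F w := lt_of_le_of_ne (hF.1 w) fun h => hw0 ((hF.2.1 w).mp h.symm)
      set w' : En n := (F w)⁻¹ • w with hw'
      have hFw' : F w' = 1 := by
        rw [hw', hF.2.2.1 _ (inv_pos.mpr hc) w, inv_mul_cancel₀ hc.ne']
      obtain ⟨α, hα⟩ := exists_subgrad F hF w' hFw'
      obtain ⟨B, _, hpos, _, hNF, _, hFminN⟩ := hell w' hFw' α hα
      exact (hFminN w).trans (hNF w)
  intro y z α hα
  rcases eq_or_ne y 0 with rfl | hy0
  · -- the subgradient at 0 is 0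
    have hF0 : F 0 = 0 := (hF.2.1 0).mpr rfl
    have hα0 : α = 0 := by
      by_contra hne
      have hn : 0 < ⟪α, α⟫ := by
        rw [real_inner_self_eq_norm_sq]
        exact pow_pos (norm_pos_iff.mpr hne) 2
      have key2 : ∀ t : ℝ, 0 < t → ⟪α, α⟫ ≤ t * (F α) ^ 2 := by
        intro t ht
        have h := hα (t • α)
        have h1 : ⟪α, t • α - 0⟫ = t * ⟪α, α⟫ := by
          rw [sub_zero, real_inner_smul_right]
        rw [hF0, h1, hF.2.2.1 t ht α, mul_pow] at h
        nlinarith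
      have hneg : ⟪α, α⟫ ≤ 0 := by
        refine le_of_forall_pos_le_add ?_
        intro ε hε
        have hC : (0 : ℝ) < (F α) ^ 2 + 1 := by positivity
        have h := key2 (ε / ((F α) ^ 2 + 1)) (by positivity)
        have h3 : ε / ((F α) ^ 2 + 1) * (F α) ^ 2 ≤ ε := by
          rw [div_mul_eq_mul_div, div_le_iff₀ hC]
          nlinarith [sq_nonneg (F α)]
        linarith
      linarith
    rw [hα0, hF0]
    have h2 : Fmin (z - 0) ≤ F z := by rw [sub_zero]; exact hle z
    have h3 : (Fmin (z - 0)) ^ 2 ≤ (F z) ^ 2 := by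
      have := hFmin.1 (z - 0)
      nlinarith
    simp only [inner_zero_left]
    linarith
  · -- rescale to the unit sphere of F
    have hc : 0 < F y := lt_of_le_of_ne (hF.1 y) fun h => hy0 ((hF.2.1 y).mp h.symm)
    set c := F y with hcdef
    set y' : En n := c⁻¹ • y with hy'
    have hFy' : F y' = 1 := by
      rw [hy', hF.2.2.1 _ (inv_pos.mpr hc) y, inv_mul_cancel₀ hc.ne']
    set α' : En n := c⁻¹ • α with hα'
    have hα'mem : α' ∈ subdiffSq F y' := by
      intro w
      have h := hα (c • w)
      have hFcw : F (c • w) = c * F w := hF.2.2.1 c hc w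
      have hd : c • w - y = c • (w - y') := by
        rw [smul_sub, hy', smul_inv_smul₀ hc.ne']
      have hin : ⟪α, c • w - y⟫ = c * ⟪α, w - y'⟫ := by rw [hd, real_inner_smul_right]
      have hin' : ⟪α', w - y'⟫ = c⁻¹ * ⟪α, w - y'⟫ := by
        rw [hα', real_inner_smul_left]
      rw [hFcw, hin, mul_pow, ← hcdef] at h
      rw [hFy', hin', one_pow]
      have hc2 : (0 : ℝ) < c ^ 2 := by positivity
      rw [← mul_le_mul_iff_right₀ hc2]
      have hcc : c ^ 2 * (c⁻¹ * ⟪α, w - y'⟫) = c * ⟪α, w - y'⟫ := by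
        field_simp
      rw [mul_add, hcc, mul_one]
      linarith
    have h := core_unit F Fmin hF hFmin hell y' hFy' α' hα'mem (c⁻¹ • z)
    -- translate back
    have hd : c⁻¹ • z - y' = c⁻¹ • (z - y) := by rw [hy', smul_sub]
    have hFz : F (c⁻¹ • z) = c⁻¹ * F z := hF.2.2.1 _ (inv_pos.mpr hc) z
    have hFm : Fmin (c⁻¹ • z - y') = c⁻¹ * Fmin (z - y) := by
      rw [hd, hFmin.2.2.1 _ (inv_pos.mpr hc) (z - y)]
    have hin : ⟪α', c⁻¹ • z - y'⟫ = c⁻¹ * (c⁻¹ * ⟪α, z - y⟫) := by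
      rw [hd, hα', real_inner_smul_left, real_inner_smul_right]
    rw [hFz, hFm, hin] at h
    have hc2 : (0 : ℝ) < c ^ 2 := by positivity
    have h' := mul_le_mul_of_nonneg_left h hc2.le
    have e1 : c ^ 2 * (c⁻¹ * F z) ^ 2 = (F z) ^ 2 := by field_simp
    have e2 : c ^ 2 * (1 + c⁻¹ * (c⁻¹ * ⟪α, z - y⟫) + (c⁻¹ * Fmin (z - y)) ^ 2)
        = c ^ 2 + ⟪α, z - y⟫ + (Fmin (z - y)) ^ 2 := by
      field_simp
    rw [e2, e1] at h'
    exact h'
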